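/- Let s ∈ (0,1], let A : (0,1) → ℝ be measurable with 0 ≤ A(y) ≤ A₁ for all y, and let σ₀ > 0 be arbitrary. Then there is a constant C depending only on s such that for every u ∈ L²(Ω × (0,T)): sup_{σ∈(0,σ₀)} σ⁻¹ ‖u(x + σ^{1/s} A(y), y, t) − u(x,y,t)‖_{L²(Ω×(0,T))} ≤ C A₁^s ‖u‖_{Q^s_{∂x}}. -/

import Mathlib

open MeasureTheory ENNReal Real Set

noncomputable section

/-- The measure on `Ω × (0,T)` with `Ω = 𝕋 × (0,1)`, where functions on the torus `𝕋 = ℝ/ℤ`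
are represented as `1`-periodic functions of `x ∈ ℝ` and the `x`-integration is over `(0,1)`. -/
def μΩT (T : ℝ) : Measure (ℝ × ℝ × ℝ) :=
  (volume.restrict (Ioo (0:ℝ) 1)).prod
    ((volume.restrict (Ioo (0:ℝ) 1)).prod (volume.restrict (Ioo (0:ℝ) T)))

section OneD

variable (F : ℝ → ℝ≥0∞)

lemma per_int (hF : ∀ x, F (x + 1) = F x) : ∀ (n : ℤ) (x : ℝ), F (x + n) = F x := by
  have key : ∀ n : ℕ, ∀ x : ℝ, F (x + n) = F x := by
    intro n
    induction n with
    | zero => simp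
    | succ k ih =>
        intro x
        have h1 : ((k:ℝ) + 1) = ((k:ℕ):ℝ) + 1 := by push_cast; ring
        have : F (x + ((k:ℕ):ℝ) + 1) = F (x + k) := hF (x + k)
        calc F (x + ((k+1:ℕ):ℝ)) = F (x + (k:ℝ) + 1) := by push_cast; ring_nf
        _ = F (x + k) := hF (x + k)
        _ = F x := ih x
  intro n x
  cases n with
  | ofNat k => exact_mod_cast key k x
  | negSucc k =>
      have := key (k+1) (x + Int.negSucc k)
      rw [show x + (Int.negSucc k : ℝ) + ((k+1:ℕ):ℝ) = x by
        rw [Int.cast_negSucc]; push_cast; ring] at this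
      exact this.symm

lemma shift_set (c : ℝ) (s : Set ℝ) :
    ∫⁻ x in (fun x => x + c) ⁻¹' s, F (x + c) = ∫⁻ x in s, F x :=
  (measurePreserving_add_right volume c).setLIntegral_comp_preimage_emb
    (measurableEmbedding_addRight c) F s

lemma shift_Ico (c a b : ℝ) :
    ∫⁻ x in Ico a b, F (x + c) = ∫⁻ x in Ico (a + c) (b + c), F x := by
  rw [← shift_set F c (Ico (a+c) (b+c)), preimage_add_const_Ico]
  norm_num

lemma shift_Ioo (c a b : ℝ) :
    ∫⁻ x in Ioo a b, F (x + c) = ∫⁻ x in Ioo (a + c) (b + c), F x := by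
  rw [← shift_set F c (Ioo (a+c) (b+c)), preimage_add_const_Ioo]
  norm_num

lemma per_interval (hF : ∀ x, F (x + 1) = F x) (c : ℝ) :
    ∫⁻ x in Ico c (c + 1), F x = ∫⁻ x in Ico 0 1, F x := by
  obtain ⟨m, c₀, hc₀, rfl⟩ : ∃ (m : ℤ) (c₀ : ℝ), (0 ≤ c₀ ∧ c₀ < 1) ∧ c = c₀ + m :=
    ⟨⌊c⌋, Int.fract c, ⟨Int.fract_nonneg c, Int.fract_lt_one c⟩, (Int.fract_add_floor c).symm⟩
  have h1 : ∫⁻ x in Ico (c₀ + m) (c₀ + m + 1), F x = ∫⁻ x in Ico c₀ (c₀ + 1), F x := by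
    have := shift_Ico F m c₀ (c₀+1)
    simp only [fun x => per_int F hF m x] at this
    rw [this]
    congr 1
    ring
  rw [h1]
  have hsplit : Ico c₀ 1 ∪ Ico 1 (c₀ + 1) = Ico c₀ (c₀ + 1) :=
    Ico_union_Ico_eq_Ico hc₀.2.le (by linarith [hc₀.1])
  have htrans : ∫⁻ x in Ico 1 (c₀ + 1), F x = ∫⁻ x in Ico 0 c₀, F x := by
    have := shift_Ico F 1 0 c₀
    simp only [fun x => hF x, zero_add] at this
    rw [← this]
  have hd1 : Disjoint (Ico c₀ 1) (Ico 1 (c₀+1)) := Ico_disjoint_Ico_same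
  have hd2 : Disjoint (Ico (0:ℝ) c₀) (Ico c₀ 1) := Ico_disjoint_Ico_same
  rw [← hsplit, lintegral_union measurableSet_Ico hd1, htrans, add_comm,
      ← lintegral_union measurableSet_Ico hd2, Ico_union_Ico_eq_Ico hc₀.1 hc₀.2.le]

lemma Ioo_to_Ico (a b : ℝ) : ∫⁻ x in Ioo a b, F x = ∫⁻ x in Ico a b, F x :=
  setLIntegral_congr Ioo_ae_eq_Ico

lemma per_Ioo_shift (hF : ∀ x, F (x + 1) = F x) (c : ℝ) :
    ∫⁻ x in Ioo 0 1, F (x + c) = ∫⁻ x in Ioo 0 1, F x := by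
  rw [Ioo_to_Ico, Ioo_to_Ico, shift_Ico, zero_add, add_comm 1 c, per_interval F hF c]

lemma per_Ico_nat (hF : ∀ x, F (x + 1) = F x) (n : ℕ) :
    ∫⁻ x in Ico (0:ℝ) n, F x = n * ∫⁻ x in Ico 0 1, F x := by
  induction n with
  | zero => simp
  | succ k ih =>
      have hu : Ico (0:ℝ) k ∪ Ico (k:ℝ) (k+1) = Ico (0:ℝ) (k+1) :=
        Ico_union_Ico_eq_Ico (by positivity) (by linarith)
      push_cast
      rw [← hu, lintegral_union measurableSet_Ico Ico_disjoint_Ico_same, ih,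
        per_interval F hF k]
      ring

lemma box_mono_1d (c r : ℝ) (hc : 0 ≤ c) (hcr : c ≤ r) :
    ∫⁻ x in Ioo 0 1, F (x + c) ≤ ∫⁻ x in Ioo 0 (1 + r), F x := by
  rw [shift_Ioo, zero_add]
  exact lintegral_mono_set (fun x hx => ⟨lt_of_le_of_lt hc hx.1, by linarith [hx.2]⟩)

end OneD

section ThreeD

/-- The `(y,t)` part of the measure. -/
def myt (T : ℝ) : Measure (ℝ × ℝ) :=
  (volume.restrict (Ioo (0:ℝ) 1)).prod (volume.restrict (Ioo (0:ℝ) T))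

lemma μΩT_eq (T : ℝ) : μΩT T = (volume.restrict (Ioo (0:ℝ) 1)).prod (myt T) := rfl

instance (T : ℝ) : SFinite (myt T) := by unfold myt; infer_instance

lemma fubini' (T : ℝ) (A : Set ℝ) (G : ℝ × ℝ × ℝ → ℝ≥0∞) (hG : Measurable G) :
    ∫⁻ p, G p ∂((volume.restrict A).prod (myt T)) =
      ∫⁻ q, (∫⁻ x in A, G (x, q)) ∂(myt T) :=
  lintegral_prod_symm G hG.aemeasurable

lemma ae_fst_myt (T : ℝ) : ∀ᵐ q ∂(myt T), q.1 ∈ Ioo (0:ℝ) 1 := by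
  rw [ae_iff]
  have : {q : ℝ × ℝ | ¬ q.1 ∈ Ioo (0:ℝ) 1} = (Ioo (0:ℝ) 1)ᶜ ×ˢ univ := by
    ext q; simp [Set.mem_prod]
  rw [this, myt, Measure.prod_prod, Measure.restrict_apply' measurableSet_Ioo]
  simp

lemma ae_x (T : ℝ) : ∀ᵐ p ∂(μΩT T), p.1 ∈ Ioo (0:ℝ) 1 := by
  rw [ae_iff]
  have : {p : ℝ × ℝ × ℝ | ¬ p.1 ∈ Ioo (0:ℝ) 1} = (Ioo (0:ℝ) 1)ᶜ ×ˢ (univ : Set (ℝ × ℝ)) := by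
    ext q; simp [Set.mem_prod]
  rw [this, μΩT_eq, Measure.prod_prod, Measure.restrict_apply' measurableSet_Ioo]
  simp

lemma ae_y (T : ℝ) : ∀ᵐ p ∂(μΩT T), p.2.1 ∈ Ioo (0:ℝ) 1 := by
  rw [μΩT_eq, ae_iff]
  have : {p : ℝ × ℝ × ℝ | ¬ p.2.1 ∈ Ioo (0:ℝ) 1}
      = (univ : Set ℝ) ×ˢ ({q : ℝ × ℝ | ¬ q.1 ∈ Ioo (0:ℝ) 1}) := by
    ext q; simp [Set.mem_prod]
  rw [this, Measure.prod_prod]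
  have h0 : (myt T) {q : ℝ × ℝ | ¬ q.1 ∈ Ioo (0:ℝ) 1} = 0 := by
    have := ae_fst_myt T; rwa [ae_iff] at this
  rw [h0, mul_zero]

/-- Master invariance lemma. -/
lemma master_inv (T : ℝ) (G : ℝ × ℝ × ℝ → ℝ≥0∞) (hG : Measurable G)
    (hGper : ∀ x y t, G (x + 1, y, t) = G (x, y, t)) (c : ℝ → ℝ) (hc : Measurable c) :
    ∫⁻ p, G (p.1 + c p.2.1, p.2) ∂(μΩT T) = ∫⁻ p, G p ∂(μΩT T) := by
  have hmap : Measurable (fun p : ℝ × ℝ × ℝ => ((p.1 + c p.2.1, p.2) : ℝ × ℝ × ℝ)) :=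
    (measurable_fst.add (hc.comp (measurable_fst.comp measurable_snd))).prodMk measurable_snd
  rw [μΩT_eq, fubini' T _ (fun p => G (p.1 + c p.2.1, p.2)) (hG.comp hmap),
    fubini' T _ _ hG]
  refine lintegral_congr fun q => ?_
  exact per_Ioo_shift (fun x => G (x, q)) (fun x => hGper x q.1 q.2) (c q.1)

/-- Master enlarged-box estimate. -/
lemma master_box (T r : ℝ) (hr : 0 ≤ r) (G : ℝ × ℝ × ℝ → ℝ≥0∞) (hG : Measurable G)
    (c : ℝ → ℝ) (hc : Measurable c) (hcb : ∀ y ∈ Ioo (0:ℝ) 1, 0 ≤ c y ∧ c y ≤ r) :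
    ∫⁻ p, G (p.1 + c p.2.1, p.2) ∂(μΩT T) ≤
      ∫⁻ p, G p ∂((volume.restrict (Ioo (0:ℝ) (1 + r))).prod (myt T)) := by
  have hmap : Measurable (fun p : ℝ × ℝ × ℝ => ((p.1 + c p.2.1, p.2) : ℝ × ℝ × ℝ)) :=
    (measurable_fst.add (hc.comp (measurable_fst.comp measurable_snd))).prodMk measurable_snd
  rw [μΩT_eq, fubini' T _ (fun p => G (p.1 + c p.2.1, p.2)) (hG.comp hmap),
    fubini' T _ _ hG]
  refine lintegral_mono_ae ?_
  filter_upwards [ae_fst_myt T] with q hq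
  exact box_mono_1d (fun x => G (x, q)) (c q.1) r (hcb q.1 hq).1 (hcb q.1 hq).2

end ThreeD

section Bridge

lemma elp_bridge {α : Type*} [MeasurableSpace α] (v : α → ℝ) (μ : Measure α) :
    eLpNorm v 2 μ = (∫⁻ p, ((‖v p‖₊ : ℝ≥0∞)) ^ (2:ℕ) ∂μ) ^ (1/2 : ℝ) := by
  rw [eLpNorm_eq_lintegral_rpow_enorm_toReal (by norm_num) (by norm_num)]
  norm_num [enorm_eq_nnnorm]

lemma lint_eq_elp_sq {α : Type*} [MeasurableSpace α] (v : α → ℝ) (μ : Measure α) :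
    ∫⁻ p, ((‖v p‖₊ : ℝ≥0∞)) ^ (2:ℕ) ∂μ = (eLpNorm v 2 μ) ^ (2:ℕ) := by
  rw [elp_bridge, ← ENNReal.rpow_natCast _ 2, ← ENNReal.rpow_mul]
  norm_num

lemma inv_eLpNorm (T : ℝ) (v : ℝ × ℝ × ℝ → ℝ) (hv : Measurable v)
    (hvper : ∀ x y t, v (x + 1, y, t) = v (x, y, t)) (c : ℝ → ℝ) (hc : Measurable c) :
    eLpNorm (fun p => v (p.1 + c p.2.1, p.2)) 2 (μΩT T) = eLpNorm v 2 (μΩT T) := by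
  rw [elp_bridge, elp_bridge]
  congr 1
  exact master_inv T (fun p => ((‖v p‖₊ : ℝ≥0∞)) ^ (2:ℕ)) (hv.nnnorm.coe_nnreal_ennreal.pow_const 2)
    (fun x y t => by simp only [hvper]) c hc

lemma box_eLpNorm (T r : ℝ) (hr : 0 ≤ r) (v : ℝ × ℝ × ℝ → ℝ) (hv : Measurable v)
    (c : ℝ → ℝ) (hc : Measurable c) (hcb : ∀ y ∈ Ioo (0:ℝ) 1, 0 ≤ c y ∧ c y ≤ r) :
    eLpNorm (fun p => v (p.1 + c p.2.1, p.2)) 2 (μΩT T) ≤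
      eLpNorm v 2 ((volume.restrict (Ioo (0:ℝ) (1 + r))).prod (myt T)) := by
  rw [elp_bridge, elp_bridge]
  refine ENNReal.rpow_le_rpow ?_ (by norm_num)
  exact master_box T r hr (fun p => ((‖v p‖₊ : ℝ≥0∞)) ^ (2:ℕ)) (hv.nnnorm.coe_nnreal_ennreal.pow_const 2)
    c hc hcb

end Bridge

section Transfer

/-- generic integer periodicity -/
lemma per_int' {β : Sort*} (F : ℝ → β) (hF : ∀ x, F (x + 1) = F x) :
    ∀ (n : ℤ) (x : ℝ), F (x + n) = F x := by
  have key : ∀ n : ℕ, ∀ x : ℝ, F (x + n) = F x := by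
    intro n
    induction n with
    | zero => simp
    | succ k ih =>
        intro x
        calc F (x + ((k+1:ℕ):ℝ)) = F (x + (k:ℝ) + 1) := by norm_num; ring_nf
        _ = F (x + k) := hF (x + k)
        _ = F x := ih x
  intro n x
  cases n with
  | ofNat k => exact_mod_cast key k x
  | negSucc k =>
      have := key (k+1) (x + Int.negSucc k)
      rw [show x + (Int.negSucc k : ℝ) + ((k+1:ℕ):ℝ) = x by
        rw [Int.cast_negSucc]; push_cast; ring] at this
      exact this.symm

lemma trans_ae (T : ℝ) (u g : ℝ × ℝ × ℝ → ℝ) (hug : u =ᵐ[μΩT T] g)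
    (huper : ∀ x y t, u (x + 1, y, t) = u (x, y, t))
    (hgper : ∀ x y t, g (x + 1, y, t) = g (x, y, t)) (c : ℝ → ℝ) (hc : Measurable c) :
    (fun p : ℝ × ℝ × ℝ => u (p.1 + c p.2.1, p.2)) =ᵐ[μΩT T]
      (fun p : ℝ × ℝ × ℝ => g (p.1 + c p.2.1, p.2)) := by
  have huint : ∀ (n : ℤ) (x y t : ℝ), u (x + n, y, t) = u (x, y, t) := by
    intro n x y t
    exact per_int' (fun x => u (x, y, t)) (fun x => huper x y t) n x
  have hgint : ∀ (n : ℤ) (x y t : ℝ), g (x + n, y, t) = g (x, y, t) := by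
    intro n x y t
    exact per_int' (fun x => g (x, y, t)) (fun x => hgper x y t) n x
  set N' := {p : ℝ × ℝ × ℝ | u p ≠ g p} with hN'def
  have hN' : μΩT T N' = 0 := by
    rw [Filter.EventuallyEq, ae_iff] at hug
    exact hug
  set N₀ := toMeasurable (μΩT T) N' with hN₀def
  have hN₀meas : MeasurableSet N₀ := measurableSet_toMeasurable _ _
  have hN₀ : μΩT T N₀ = 0 := by rw [hN₀def, measure_toMeasurable]; exact hN'
  set N₁ := ⋂ n : ℤ, (fun p : ℝ × ℝ × ℝ => ((p.1 + (n:ℝ), p.2) : ℝ × ℝ × ℝ)) ⁻¹' N₀ with hN₁def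
  have hmapn : ∀ n : ℤ, Measurable (fun p : ℝ × ℝ × ℝ => ((p.1 + (n:ℝ), p.2) : ℝ × ℝ × ℝ)) :=
    fun n => (measurable_fst.add_const _).prodMk measurable_snd
  have hN₁meas : MeasurableSet N₁ := MeasurableSet.iInter fun n => (hmapn n) hN₀meas
  have hsub : N' ⊆ N₁ := by
    intro p hp
    refine mem_iInter.2 fun n => subset_toMeasurable _ _ ?_
    have h1 : u (p.1 + (n:ℝ), p.2) = u p := by
      have := huint n p.1 p.2.1 p.2.2
      simpa using this
    have h2 : g (p.1 + (n:ℝ), p.2) = g p := by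
      have := hgint n p.1 p.2.1 p.2.2
      simpa using this
    simp only [hN'def, mem_setOf_eq] at hp ⊢
    rw [h1, h2]
    exact hp
  have hN₁sub : N₁ ⊆ {p : ℝ × ℝ × ℝ | (p.1 + ((0:ℤ):ℝ), p.2) ∈ N₀} := iInter_subset _ 0
  have hN₁null : μΩT T N₁ = 0 := by
    have hset : {p : ℝ × ℝ × ℝ | (p.1 + ((0:ℤ):ℝ), p.2) ∈ N₀} = N₀ := by
      ext p; simp
    have hle : μΩT T N₁ ≤ μΩT T N₀ := by
      refine measure_mono ?_
      rw [← hset]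
      exact hN₁sub
    exact le_antisymm (hN₀ ▸ hle) (zero_le)
  have hN₁per : ∀ x y t : ℝ, ((x + 1, y, t) ∈ N₁) ↔ ((x, y, t) ∈ N₁) := by
    intro x y t
    simp only [hN₁def, mem_iInter, mem_preimage]
    constructor
    · intro h n
      have := h (n - 1)
      have harg : (x + 1 + ((n - 1 : ℤ):ℝ)) = x + (n:ℝ) := by push_cast; ring
      rwa [harg] at this
    · intro h n
      have := h (n + 1)
      have harg : (x + ((n + 1 : ℤ):ℝ)) = x + 1 + (n:ℝ) := by push_cast; ring
      rwa [harg] at this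
  set G : ℝ × ℝ × ℝ → ℝ≥0∞ := N₁.indicator 1 with hGdef
  have hGmeas : Measurable G := measurable_one.indicator hN₁meas
  have hGper : ∀ x y t : ℝ, G (x + 1, y, t) = G (x, y, t) := by
    intro x y t
    by_cases h : (x, y, t) ∈ N₁
    · rw [hGdef, indicator_of_mem ((hN₁per x y t).2 h), indicator_of_mem h]
      rfl
    · rw [hGdef, indicator_of_notMem (fun hc => h ((hN₁per x y t).1 hc)),
        indicator_of_notMem h]
  have h0 : ∫⁻ p, G (p.1 + c p.2.1, p.2) ∂(μΩT T) = 0 := by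
    rw [master_inv T G hGmeas hGper c hc, hGdef, lintegral_indicator hN₁meas]
    simp [hN₁null]
  have hae := (lintegral_eq_zero_iff (hGmeas.comp
    ((measurable_fst.add (hc.comp (measurable_fst.comp measurable_snd))).prodMk
      measurable_snd))).mp h0
  filter_upwards [hae] with p hp
  have hnotin : (p.1 + c p.2.1, p.2) ∉ N₁ := by
    intro hmem
    have : G (p.1 + c p.2.1, p.2) = 1 := indicator_of_mem hmem 1
    simp only [Function.comp, Pi.zero_apply, Pi.add_apply] at hp
    rw [hp] at this
    exact one_ne_zero this.symm
  have hnotin' : (p.1 + c p.2.1, p.2) ∉ N' := fun h => hnotin (hsub h)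
  simpa [hN'def, not_not] using hnotin'

end Transfer

section SmallShift

lemma smallshift (T r : ℝ) (hr : 0 < r) (g : ℝ × ℝ × ℝ → ℝ) (hg : Measurable g)
    (hgper : ∀ x y t, g (x + 1, y, t) = g (x, y, t))
    (hg2 : eLpNorm g 2 (μΩT T) < ⊤) (ε : ℝ≥0∞) (hε : ε ≠ 0) :
    ∃ ρ : ℝ, 0 < ρ ∧ ρ ≤ r ∧ ∀ h : ℝ → ℝ, Measurable h →
      (∀ y ∈ Ioo (0:ℝ) 1, 0 ≤ h y ∧ h y ≤ ρ) →
      eLpNorm (fun p => g (p.1 + h p.2.1, p.2) - g p) 2 (μΩT T) ≤ ε := by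
  classical
  set B : Set (ℝ × ℝ × ℝ) := Ioo 0 (1+r) ×ˢ (Ioo (0:ℝ) 1 ×ˢ Ioo (0:ℝ) T) with hBdef
  have hBmeas : MeasurableSet B :=
    measurableSet_Ioo.prod (measurableSet_Ioo.prod measurableSet_Ioo)
  have hμbig : (volume.restrict (Ioo (0:ℝ) (1+r))).prod (myt T) = volume.restrict B := by
    rw [hBdef, myt, Measure.prod_restrict, ← Measure.volume_eq_prod _ _, Measure.prod_restrict,
      ← Measure.volume_eq_prod _ _]
  have hμsmall : μΩT T = volume.restrict (Ioo (0:ℝ) 1 ×ˢ (Ioo (0:ℝ) 1 ×ˢ Ioo (0:ℝ) T)) := by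
    rw [μΩT_eq, myt, Measure.prod_restrict, ← Measure.volume_eq_prod _ _, Measure.prod_restrict,
      ← Measure.volume_eq_prod _ _]
  have hμle : μΩT T ≤ volume.restrict B := by
    rw [hμsmall]
    refine Measure.restrict_mono ?_ le_rfl
    exact Set.prod_mono (fun x hx => ⟨hx.1, by linarith [hx.2]⟩) subset_rfl
  set G2 : ℝ × ℝ × ℝ → ℝ≥0∞ := fun p => ((‖g p‖₊ : ℝ≥0∞)) ^ (2:ℕ) with hG2def
  have hG2meas : Measurable G2 := hg.nnnorm.coe_nnreal_ennreal.pow_const 2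
  have hG2per : ∀ x : ℝ, ∀ q : ℝ × ℝ, G2 (x + 1, q) = G2 (x, q) := by
    intro x q
    have hgq : g (x + 1, q) = g (x, q) := hgper x q.1 q.2
    simp only [hG2def, hgq]
  set K : ℕ := ⌈1 + r⌉₊ with hKdef
  have hK : 1 + r ≤ K := Nat.le_ceil _
  have hsmallint : ∫⁻ p, G2 p ∂(μΩT T) < ⊤ := by
    rw [hG2def, lint_eq_elp_sq]
    exact ENNReal.pow_lt_top hg2
  have hbigint : ∫⁻ p, G2 p ∂(volume.restrict B) < ⊤ := by
    rw [← hμbig, fubini' T _ G2 hG2meas]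
    have hinner : ∀ q : ℝ × ℝ, (∫⁻ x in Ioo 0 (1+r), G2 (x, q)) ≤
        K * ∫⁻ x in Ioo 0 1, G2 (x, q) := by
      intro q
      calc ∫⁻ x in Ioo 0 (1+r), G2 (x, q)
          ≤ ∫⁻ x in Ico (0:ℝ) K, G2 (x, q) :=
            lintegral_mono_set (fun x hx => ⟨hx.1.le, lt_of_lt_of_le hx.2 hK⟩)
        _ = K * ∫⁻ x in Ico (0:ℝ) 1, G2 (x, q) :=
            per_Ico_nat (fun x => G2 (x, q)) (fun x => hG2per x q) K
        _ = K * ∫⁻ x in Ioo (0:ℝ) 1, G2 (x, q) := by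
            rw [Ioo_to_Ico]
    calc ∫⁻ q, (∫⁻ x in Ioo 0 (1+r), G2 (x, q)) ∂(myt T)
        ≤ ∫⁻ q, (K : ℝ≥0∞) * (∫⁻ x in Ioo 0 1, G2 (x, q)) ∂(myt T) := lintegral_mono hinner
      _ = (K : ℝ≥0∞) * ∫⁻ q, (∫⁻ x in Ioo 0 1, G2 (x, q)) ∂(myt T) :=
          lintegral_const_mul _ hG2meas.lintegral_prod_left'
      _ = (K : ℝ≥0∞) * ∫⁻ p, G2 p ∂(μΩT T) := by rw [μΩT_eq, fubini' T _ G2 hG2meas]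
      _ < ⊤ := ENNReal.mul_lt_top (by simp) hsmallint
  have hgbig2 : eLpNorm g 2 (volume.restrict B) < ⊤ := by
    rw [elp_bridge]
    exact ENNReal.rpow_lt_top_of_nonneg (by norm_num) hbigint.ne
  set Gb : ℝ × ℝ × ℝ → ℝ := B.indicator g with hGbdef
  have hGbmeas : Measurable Gb := hg.indicator hBmeas
  have hGbmem : MemLp Gb 2 (volume : Measure (ℝ × ℝ × ℝ)) := by
    refine ⟨hGbmeas.aestronglyMeasurable, ?_⟩
    rw [hGbdef, eLpNorm_indicator_eq_eLpNorm_restrict hBmeas]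
    exact hgbig2
  have hε4 : ε / 4 ≠ 0 := by
    simp [ENNReal.div_eq_zero_iff, hε]
  obtain ⟨v, v_supp, hv_close, v_cont, _⟩ :=
    hGbmem.exists_hasCompactSupport_eLpNorm_sub_le (by norm_num : (2:ℝ≥0∞) ≠ ∞) hε4
  have hvmeas : Measurable v := v_cont.measurable
  have hUC : UniformContinuous v := v_supp.uniformContinuous_of_continuous v_cont
  haveI : IsFiniteMeasure (μΩT T) := by
    constructor
    rw [hμsmall, Measure.restrict_apply_univ, Measure.volume_eq_prod _ _, Measure.prod_prod,
      Measure.volume_eq_prod _ _, Measure.prod_prod, Real.volume_Ioo, Real.volume_Ioo]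
    exact ENNReal.mul_lt_top ENNReal.ofReal_lt_top
      (ENNReal.mul_lt_top ENNReal.ofReal_lt_top ENNReal.ofReal_lt_top)
  set V := (μΩT T) univ ^ (((2:ℝ≥0∞).toReal)⁻¹) with hVdef
  have hVne : V ≠ ⊤ := ENNReal.rpow_ne_top_of_nonneg (by norm_num) (measure_ne_top _ _)
  have hhalf : ε/2 ≠ 0 := by simp [ENNReal.div_eq_zero_iff, hε]
  set ε2 := min 1 (ε/2) with hε2def
  have hε2pos : 0 < ε2 := lt_min one_pos (pos_iff_ne_zero.mpr hhalf)
  have hε2ne_top : ε2 ≠ ⊤ := ne_top_of_le_ne_top one_ne_top (min_le_left _ _)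
  set εC := (ε2 / (V + 1)).toReal with hεCdef
  have hdvne0 : ε2 / (V+1) ≠ 0 := by
    simp [ENNReal.div_eq_zero_iff, hε2pos.ne', ENNReal.add_eq_top, hVne]
  have hdvnetop : ε2 / (V+1) ≠ ⊤ := (ENNReal.div_lt_top hε2ne_top (by simp)).ne
  have hεCpos : 0 < εC := ENNReal.toReal_pos hdvne0 hdvnetop
  obtain ⟨δ, hδpos, hδ⟩ := Metric.uniformContinuous_iff.mp hUC εC hεCpos
  refine ⟨min r (δ/2), lt_min hr (by linarith), min_le_left _ _, ?_⟩
  intro h hh hb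
  set f1 : ℝ × ℝ × ℝ → ℝ := fun p => v (p.1 + h p.2.1, p.2) - v p with hf1def
  set w : ℝ × ℝ × ℝ → ℝ := fun p => g p - v p with hwdef
  set wS : ℝ × ℝ × ℝ → ℝ := fun p => w (p.1 + h p.2.1, p.2) with hwSdef
  have hwmeas : Measurable w := hg.sub hvmeas
  have hSmeas : Measurable (fun p : ℝ × ℝ × ℝ => ((p.1 + h p.2.1, p.2) : ℝ × ℝ × ℝ)) :=
    (measurable_fst.add (hh.comp (measurable_fst.comp measurable_snd))).prodMk measurable_snd
  have hwSmeas : Measurable wS := hwmeas.comp hSmeas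
  have hf1meas : Measurable f1 := (hvmeas.comp hSmeas).sub hvmeas
  have hident : (fun p : ℝ × ℝ × ℝ => g (p.1 + h p.2.1, p.2) - g p)
      = fun p => f1 p + (wS p - w p) := by
    funext p
    simp only [hf1def, hwSdef, hwdef]
    ring
  have hb' : ∀ y ∈ Ioo (0:ℝ) 1, 0 ≤ h y ∧ h y ≤ r := fun y hy =>
    ⟨(hb y hy).1, (hb y hy).2.trans (min_le_left _ _)⟩
  have hptw : ∀ᵐ p ∂(μΩT T), ‖f1 p‖ ≤ εC := by
    filter_upwards [ae_y T] with p hp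
    have hdist : dist ((p.1 + h p.2.1, p.2) : ℝ × ℝ × ℝ) p < δ := by
      rw [Prod.dist_eq]
      have h2 : dist (p.1 + h p.2.1) p.1 = h p.2.1 := by
        rw [Real.dist_eq, add_sub_cancel_left, abs_of_nonneg (hb p.2.1 hp).1]
      have h3 : dist (p.2 : ℝ × ℝ) p.2 = 0 := dist_self _
      rw [h2, h3]
      have hle : h p.2.1 ≤ δ/2 := (hb p.2.1 hp).2.trans (min_le_right _ _)
      have hmax : max (h p.2.1) 0 ≤ δ/2 := max_le hle (by linarith)
      linarith
    have hvd := hδ hdist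
    rw [hf1def]
    rw [show ‖v (p.1 + h p.2.1, p.2) - v p‖ = dist (v (p.1 + h p.2.1, p.2)) (v p) from
      (dist_eq_norm _ _).symm]
    exact hvd.le
  have hf1bound : eLpNorm f1 2 (μΩT T) ≤ ε / 2 := by
    have h1 := eLpNorm_le_of_ae_bound (p := 2) (μ := μΩT T) hptw
    calc eLpNorm f1 2 (μΩT T) ≤ V * ENNReal.ofReal εC := by rw [hVdef]; exact h1
      _ = V * (ε2 / (V+1)) := by rw [hεCdef, ENNReal.ofReal_toReal hdvnetop]
      _ ≤ (V+1) * (ε2 / (V+1)) := mul_le_mul_left le_self_add _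
      _ ≤ ε2 := ENNReal.mul_div_le
      _ ≤ ε / 2 := min_le_right _ _
  have hwcongr : eLpNorm w 2 (volume.restrict B) ≤ ε / 4 := by
    calc eLpNorm w 2 (volume.restrict B)
        = eLpNorm (Gb - v) 2 (volume.restrict B) := by
          refine eLpNorm_congr_ae ?_
          filter_upwards [self_mem_ae_restrict hBmeas] with p hpB
          simp only [hwdef, Pi.sub_apply, hGbdef, indicator_of_mem hpB]
      _ ≤ eLpNorm (Gb - v) 2 volume := eLpNorm_mono_measure _ Measure.restrict_le_self
      _ ≤ ε / 4 := hv_close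
  have hwS_bound : eLpNorm wS 2 (μΩT T) ≤ ε / 4 := by
    calc eLpNorm wS 2 (μΩT T)
        ≤ eLpNorm w 2 ((volume.restrict (Ioo (0:ℝ) (1+r))).prod (myt T)) :=
          box_eLpNorm T r hr.le w hwmeas h hh hb'
      _ = eLpNorm w 2 (volume.restrict B) := by rw [hμbig]
      _ ≤ ε / 4 := hwcongr
  have hw_bound : eLpNorm w 2 (μΩT T) ≤ ε / 4 :=
    le_trans (eLpNorm_mono_measure _ hμle) hwcongr
  have h44 : ε / 4 + ε / 4 = ε / 2 := by
    rw [ENNReal.div_add_div_same, ← two_mul, show (4:ℝ≥0∞) = 2 * 2 by norm_num,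
      ENNReal.mul_div_mul_left _ _ two_ne_zero ENNReal.ofNat_ne_top]
  rw [hident]
  calc eLpNorm (fun p => f1 p + (wS p - w p)) 2 (μΩT T)
      ≤ eLpNorm f1 2 (μΩT T) + eLpNorm (fun p => wS p - w p) 2 (μΩT T) :=
        eLpNorm_add_le hf1meas.aestronglyMeasurable
          (hwSmeas.sub hwmeas).aestronglyMeasurable one_le_two
    _ ≤ eLpNorm f1 2 (μΩT T) + (eLpNorm wS 2 (μΩT T) + eLpNorm w 2 (μΩT T)) :=
        add_le_add_right (eLpNorm_sub_le hwSmeas.aestronglyMeasurable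
          hwmeas.aestronglyMeasurable one_le_two) _
    _ ≤ ε/2 + (ε/4 + ε/4) := add_le_add hf1bound (add_le_add hwS_bound hw_bound)
    _ = ε := by rw [h44, ENNReal.add_halves]

end SmallShift

section Induction

lemma induction_lemma (T s : ℝ) (hs0 : 0 < s) (g : ℝ × ℝ × ℝ → ℝ) (hg : Measurable g)
    (hgper : ∀ x y t, g (x + 1, y, t) = g (x, y, t)) (Q : ℝ≥0∞)
    (hQ : ∀ δ : ℝ, 0 < δ → eLpNorm (fun p : ℝ × ℝ × ℝ => g (p.1 + δ, p.2) - g p) 2 (μΩT T) ≤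
      ENNReal.ofReal (δ ^ s) * Q)
    (C : ℝ) (hCeq : ((1/2:ℝ) ^ s) * (1 + C) = C) (hC0 : 0 ≤ C)
    (ρ : ℝ) (hρ : 0 < ρ) (ε : ℝ≥0∞)
    (hbase : ∀ h : ℝ → ℝ, Measurable h → (∀ y ∈ Ioo (0:ℝ) 1, 0 ≤ h y ∧ h y ≤ ρ) →
      eLpNorm (fun p : ℝ × ℝ × ℝ => g (p.1 + h p.2.1, p.2) - g p) 2 (μΩT T) ≤ ε) :
    ∀ n : ℕ, ∀ r : ℝ, 0 < r → r ≤ ρ * 2 ^ n →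
      ∀ h : ℝ → ℝ, Measurable h → (∀ y ∈ Ioo (0:ℝ) 1, 0 ≤ h y ∧ h y ≤ r) →
      eLpNorm (fun p : ℝ × ℝ × ℝ => g (p.1 + h p.2.1, p.2) - g p) 2 (μΩT T) ≤
        ENNReal.ofReal (r ^ s * C) * Q + ε := by
  intro n
  induction n with
  | zero =>
      intro r hr hrρ h hh hb
      refine le_trans (hbase h hh fun y hy =>
        ⟨(hb y hy).1, (hb y hy).2.trans (by simpa using hrρ)⟩) ?_
      exact le_add_self
  | succ n ih =>
      intro r hr hrρ h hh hb
      set h' : ℝ → ℝ := fun y => if r/2 < h y then h y - r/2 else h y with hh'def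
      have hh' : Measurable h' :=
        Measurable.ite (measurableSet_lt measurable_const hh) (hh.sub measurable_const) hh
      set e : ℝ → ℝ := fun y => h y - h' y with hedef
      have he : Measurable e := hh.sub hh'
      set W : ℝ × ℝ × ℝ → ℝ := fun q => g (q.1 + e q.2.1, q.2) - g q with hWdef
      have hWmeas : Measurable W :=
        (hg.comp ((measurable_fst.add (he.comp (measurable_fst.comp measurable_snd))).prodMk
          measurable_snd)).sub hg
      have hWper : ∀ x y t, W (x + 1, y, t) = W (x, y, t) := by
        intro x y t
        simp only [hWdef]
        rw [show x + 1 + e y = (x + e y) + 1 by ring, hgper, hgper]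
      have hident : (fun p : ℝ × ℝ × ℝ => g (p.1 + h p.2.1, p.2) - g p) =
          fun p => W (p.1 + h' p.2.1, p.2) + (g (p.1 + h' p.2.1, p.2) - g p) := by
        funext p
        simp only [hWdef]
        rw [show p.1 + h' p.2.1 + e p.2.1 = p.1 + h p.2.1 by simp only [hedef]; ring]
        ring
      have hWC : eLpNorm (fun p : ℝ × ℝ × ℝ => W (p.1 + h' p.2.1, p.2)) 2 (μΩT T)
          = eLpNorm W 2 (μΩT T) := inv_eLpNorm T W hWmeas hWper h' hh'
      have hWle : ∀ q : ℝ × ℝ × ℝ, ‖W q‖ ≤ ‖g (q.1 + r/2, q.2) - g q‖ := by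
        intro q
        by_cases hcond : r/2 < h q.2.1
        · have her : e q.2.1 = r/2 := by simp [hedef, hh'def, hcond]
          simp only [hWdef, her]
          exact le_refl _
        · have he0 : e q.2.1 = 0 := by simp [hedef, hh'def, hcond]
          simp only [hWdef, he0, add_zero]
          simp [norm_nonneg]
      have hWbound : eLpNorm W 2 (μΩT T) ≤ ENNReal.ofReal ((r/2) ^ s) * Q :=
        le_trans (eLpNorm_mono hWle) (hQ (r/2) (by linarith))
      have hb' : ∀ y ∈ Ioo (0:ℝ) 1, 0 ≤ h' y ∧ h' y ≤ r/2 := by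
        intro y hy
        rcases hb y hy with ⟨h0, hr'⟩
        by_cases hcond : r/2 < h y
        · simp only [hh'def, if_pos hcond]
          constructor <;> linarith
        · simp only [hh'def, if_neg hcond]
          exact ⟨h0, not_lt.mp hcond⟩
      have hrn' : r/2 ≤ ρ * 2 ^ n := by
        rw [pow_succ] at hrρ
        linarith
      have hIH := ih (r/2) (by linarith) hrn' h' hh' hb'
      have hmeas1 : Measurable (fun p : ℝ × ℝ × ℝ => W (p.1 + h' p.2.1, p.2)) :=
        hWmeas.comp ((measurable_fst.add (hh'.comp (measurable_fst.comp measurable_snd))).prodMk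
          measurable_snd)
      have hmeas2 : Measurable (fun p : ℝ × ℝ × ℝ => g (p.1 + h' p.2.1, p.2) - g p) :=
        (hg.comp ((measurable_fst.add (hh'.comp (measurable_fst.comp measurable_snd))).prodMk
          measurable_snd)).sub hg
      have hkey : (r/2:ℝ) ^ s + (r/2:ℝ) ^ s * C = r ^ s * C := by
        have hhalf : (r/2:ℝ) ^ s = r ^ s * (1/2:ℝ) ^ s := by
          rw [show (r/2:ℝ) = r * (1/2) by ring, Real.mul_rpow hr.le (by norm_num)]
        calc (r/2:ℝ) ^ s + (r/2:ℝ) ^ s * C = (r/2:ℝ) ^ s * (1 + C) := by ring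
          _ = r ^ s * ((1/2:ℝ) ^ s * (1 + C)) := by rw [hhalf]; ring
          _ = r ^ s * C := by rw [hCeq]
      rw [hident]
      calc eLpNorm (fun p : ℝ × ℝ × ℝ => W (p.1 + h' p.2.1, p.2)
            + (g (p.1 + h' p.2.1, p.2) - g p)) 2 (μΩT T)
          ≤ eLpNorm (fun p : ℝ × ℝ × ℝ => W (p.1 + h' p.2.1, p.2)) 2 (μΩT T)
            + eLpNorm (fun p : ℝ × ℝ × ℝ => g (p.1 + h' p.2.1, p.2) - g p) 2 (μΩT T) :=
            eLpNorm_add_le hmeas1.aestronglyMeasurable hmeas2.aestronglyMeasurable one_le_two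
        _ ≤ ENNReal.ofReal ((r/2) ^ s) * Q + (ENNReal.ofReal ((r/2) ^ s * C) * Q + ε) :=
            add_le_add (hWC ▸ hWbound) hIH
        _ = (ENNReal.ofReal ((r/2) ^ s) + ENNReal.ofReal ((r/2) ^ s * C)) * Q + ε := by
            rw [add_mul]; ring
        _ = ENNReal.ofReal (r ^ s * C) * Q + ε := by
            rw [← ENNReal.ofReal_add (Real.rpow_nonneg (by linarith) s)
              (mul_nonneg (Real.rpow_nonneg (by linarith) s) hC0), hkey]

end Induction


/-- `‖u‖_{Q^s_{∂x}} = sup_{σ > 0} σ⁻¹ ‖u(x + σ^{1/s}, y, t) − u(x,y,t)‖_{L²(Ω×(0,T))}`. -/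
def QsDx (T s : ℝ) (u : ℝ × ℝ × ℝ → ℝ) : ℝ≥0∞ :=
  ⨆ σ : {σ : ℝ // 0 < σ}, ENNReal.ofReal ((σ : ℝ))⁻¹ *
    eLpNorm (fun p : ℝ × ℝ × ℝ =>
      u (p.1 + (σ : ℝ) ^ (1 / s), p.2.1, p.2.2) - u p) 2 (μΩT T)

/-- `‖u‖_{Q^s_{A∂x},σ₀} = sup_{σ ∈ (0,σ₀)} σ⁻¹ ‖u(x + σ^{1/s} A(y), y, t) − u(x,y,t)‖_{L²(Ω×(0,T))}`. -/
def QsADx (T s : ℝ) (A : ℝ → ℝ) (σ₀ : ℝ) (u : ℝ × ℝ × ℝ → ℝ) : ℝ≥0∞ :=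
  ⨆ σ ∈ Ioo (0:ℝ) σ₀, ENNReal.ofReal σ⁻¹ *
    eLpNorm (fun p : ℝ × ℝ × ℝ =>
      u (p.1 + σ ^ (1 / s) * A p.2.1, p.2.1, p.2.2) - u p) 2 (μΩT T)

/-- Upper bound for the directional seminorm `Q^s_{A∂x}` when `0 ≤ A ≤ A₁`:
`‖u‖_{Q^s_{A∂x},σ₀} ≤ C A₁^s ‖u‖_{Q^s_{∂x}}`, with `C` depending only on `s`. -/
theorem QsADx_le_of_bounded :
    ∀ s : ℝ, s ∈ Ioc (0:ℝ) 1 →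
    ∃ C : ℝ, 0 < C ∧
      ∀ T : ℝ, 0 < T →
      ∀ A : ℝ → ℝ, Measurable A →
      ∀ A₁ : ℝ, (∀ y ∈ Ioo (0:ℝ) 1, 0 ≤ A y ∧ A y ≤ A₁) →
      ∀ σ₀ : ℝ, 0 < σ₀ →
      ∀ u : ℝ × ℝ × ℝ → ℝ,
        (∀ x y t, u (x + 1, y, t) = u (x, y, t)) →
        MemLp u 2 (μΩT T) →
        QsADx T s A σ₀ u ≤ ENNReal.ofReal (C * A₁ ^ s) * QsDx T s u := by
  intro s hs
  obtain ⟨hs0, _hs1⟩ := hs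
  have hc2pos : (0:ℝ) < (1/2:ℝ) ^ s := Real.rpow_pos_of_pos (by norm_num) s
  have hc2lt : ((1/2:ℝ) ^ s) < 1 := Real.rpow_lt_one (by norm_num) (by norm_num) hs0
  refine ⟨((1/2:ℝ) ^ s) / (1 - (1/2:ℝ) ^ s), div_pos hc2pos (by linarith), ?_⟩
  set C : ℝ := ((1/2:ℝ) ^ s) / (1 - (1/2:ℝ) ^ s) with hCdef
  have hC0 : 0 < C := div_pos hc2pos (by linarith)
  have hCeq : ((1/2:ℝ) ^ s) * (1 + C) = C := by
    have hne : (1:ℝ) - (1/2:ℝ) ^ s ≠ 0 := by linarith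
    rw [hCdef]
    field_simp
    ring
  intro T hT A hA A₁ hA₁ σ₀ hσ₀ u huper hu
  -- measurable periodic representative
  set g₀ := hu.1.mk u with hg₀def
  have hg₀meas : StronglyMeasurable g₀ := hu.1.stronglyMeasurable_mk
  set g : ℝ × ℝ × ℝ → ℝ := fun p => g₀ (Int.fract p.1, p.2) with hgdef
  have hgmeas : Measurable g := hg₀meas.measurable.comp
    ((measurable_fract.comp measurable_fst).prodMk measurable_snd)
  have hgper : ∀ x y t, g (x + 1, y, t) = g (x, y, t) := by
    intro x y t
    simp only [hgdef]
    rw [Int.fract_add_one]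
  have hug : u =ᵐ[μΩT T] g := by
    filter_upwards [hu.1.ae_eq_mk, ae_x T] with p hp hx
    simp only [hgdef]
    rw [Int.fract_eq_self.mpr ⟨hx.1.le, hx.2⟩]
    exact hp
  have hg2 : eLpNorm g 2 (μΩT T) < ⊤ := (MemLp.ae_eq hug hu).2
  set Q := QsDx T s u with hQdef
  have hQ : ∀ δ : ℝ, 0 < δ →
      eLpNorm (fun p : ℝ × ℝ × ℝ => g (p.1 + δ, p.2) - g p) 2 (μΩT T) ≤
        ENNReal.ofReal (δ ^ s) * Q := by
    intro δ hδ
    have hδs : (0:ℝ) < δ ^ s := Real.rpow_pos_of_pos hδ s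
    have hexp : ((δ ^ s : ℝ)) ^ (1/s) = δ := by
      rw [← Real.rpow_mul hδ.le, mul_one_div_cancel hs0.ne', Real.rpow_one]
    have htrans : eLpNorm (fun p : ℝ × ℝ × ℝ => g (p.1 + δ, p.2) - g p) 2 (μΩT T)
        = eLpNorm (fun p : ℝ × ℝ × ℝ => u (p.1 + δ, p.2) - u p) 2 (μΩT T) := by
      refine eLpNorm_congr_ae ?_
      filter_upwards [trans_ae T u g hug huper hgper (fun _ => δ) measurable_const, hug]
        with p hp1 hp2
      have hp1' : u (p.1 + δ, p.2) = g (p.1 + δ, p.2) := hp1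
      rw [← hp1', ← hp2]
    have hle : ENNReal.ofReal ((δ ^ s : ℝ))⁻¹ * eLpNorm (fun p : ℝ × ℝ × ℝ =>
        u (p.1 + ((δ ^ s : ℝ)) ^ (1/s), p.2.1, p.2.2) - u p) 2 (μΩT T) ≤ Q := by
      rw [hQdef, QsDx]
      exact le_iSup (fun σ : {σ : ℝ // 0 < σ} => ENNReal.ofReal ((σ : ℝ))⁻¹ *
        eLpNorm (fun p : ℝ × ℝ × ℝ => u (p.1 + (σ : ℝ) ^ (1/s), p.2.1, p.2.2) - u p) 2 (μΩT T))
        ⟨δ ^ s, hδs⟩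
    rw [hexp] at hle
    have hmul : eLpNorm (fun p : ℝ × ℝ × ℝ => u (p.1 + δ, p.2.1, p.2.2) - u p) 2 (μΩT T)
        ≤ ENNReal.ofReal (δ ^ s) * Q := by
      calc eLpNorm (fun p : ℝ × ℝ × ℝ => u (p.1 + δ, p.2.1, p.2.2) - u p) 2 (μΩT T)
          = ENNReal.ofReal (δ ^ s) * (ENNReal.ofReal ((δ ^ s : ℝ))⁻¹ *
            eLpNorm (fun p : ℝ × ℝ × ℝ => u (p.1 + δ, p.2.1, p.2.2) - u p) 2 (μΩT T)) := by
            rw [← mul_assoc, ← ENNReal.ofReal_mul hδs.le, mul_inv_cancel₀ hδs.ne',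
              ENNReal.ofReal_one, one_mul]
        _ ≤ ENNReal.ofReal (δ ^ s) * Q := mul_le_mul_right hle _
    rw [htrans]
    exact hmul
  rw [QsADx]
  refine iSup₂_le ?_
  intro σ hσ
  obtain ⟨hσ0, _⟩ := hσ
  have hA₁0 : 0 ≤ A₁ := le_trans (hA₁ (1/2) (by norm_num)).1 (hA₁ (1/2) (by norm_num)).2
  rcases eq_or_lt_of_le hA₁0 with hA₁eq | hA₁pos
  · have hzero : (fun p : ℝ × ℝ × ℝ => u (p.1 + σ ^ (1/s) * A p.2.1, p.2.1, p.2.2) - u p)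
        =ᵐ[μΩT T] (fun _ => (0:ℝ)) := by
      filter_upwards [ae_y T] with p hp
      have hAy : A p.2.1 = 0 :=
        le_antisymm ((hA₁ p.2.1 hp).2.trans hA₁eq.ge) (hA₁ p.2.1 hp).1
      rw [hAy, mul_zero, add_zero]
      exact sub_eq_zero_of_eq rfl
    rw [eLpNorm_congr_ae hzero, eLpNorm_zero', mul_zero]
    exact zero_le
  · set r : ℝ := σ ^ (1/s) * A₁ with hrdef
    have hσ1s : (0:ℝ) < σ ^ (1/s) := Real.rpow_pos_of_pos hσ0 _
    have hrpos : 0 < r := mul_pos hσ1s hA₁pos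
    set h : ℝ → ℝ := fun y => σ ^ (1/s) * A y with hhdef
    have hhmeas : Measurable h := measurable_const.mul hA
    have hb : ∀ y ∈ Ioo (0:ℝ) 1, 0 ≤ h y ∧ h y ≤ r := by
      intro y hy
      exact ⟨mul_nonneg hσ1s.le (hA₁ y hy).1,
        mul_le_mul_of_nonneg_left (hA₁ y hy).2 hσ1s.le⟩
    refine ENNReal.le_of_forall_pos_le_add ?_
    intro ε' hε' _
    set εA : ℝ≥0∞ := ENNReal.ofReal σ * (ε' : ℝ≥0∞) with hεAdef
    have hεA0 : εA ≠ 0 := by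
      rw [hεAdef]
      exact mul_ne_zero (by simp [ENNReal.ofReal_eq_zero, not_le, hσ0])
        (by exact_mod_cast hε'.ne')
    obtain ⟨ρ, hρ0, _, hρprop⟩ := smallshift T r hrpos g hgmeas hgper hg2 εA hεA0
    obtain ⟨n, hn⟩ := pow_unbounded_of_one_lt (r/ρ) (one_lt_two : (1:ℝ) < 2)
    have hrn : r ≤ ρ * 2 ^ n := by
      rw [div_lt_iff₀ hρ0] at hn
      nlinarith
    have hind := induction_lemma T s hs0 g hgmeas hgper Q hQ C hCeq hC0.le ρ hρ0 εA hρprop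
      n r hrpos hrn h hhmeas hb
    have htrans : eLpNorm (fun p : ℝ × ℝ × ℝ =>
          u (p.1 + σ ^ (1/s) * A p.2.1, p.2.1, p.2.2) - u p) 2 (μΩT T)
        = eLpNorm (fun p : ℝ × ℝ × ℝ => g (p.1 + h p.2.1, p.2) - g p) 2 (μΩT T) := by
      refine eLpNorm_congr_ae ?_
      filter_upwards [trans_ae T u g hug huper hgper h hhmeas, hug] with p hp1 hp2
      have hp1' : u (p.1 + σ ^ (1/s) * A p.2.1, p.2.1, p.2.2) = g (p.1 + h p.2.1, p.2) := hp1
      rw [hp1', hp2]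
    rw [htrans]
    have hrs : r ^ s = σ * A₁ ^ s := by
      rw [hrdef, Real.mul_rpow hσ1s.le hA₁0, ← Real.rpow_mul hσ0.le,
        one_div_mul_cancel hs0.ne', Real.rpow_one]
    have hfinal : ENNReal.ofReal σ⁻¹ * (ENNReal.ofReal (r ^ s * C) * Q + εA)
        ≤ ENNReal.ofReal (C * A₁ ^ s) * Q + (ε' : ℝ≥0∞) := by
      rw [mul_add]
      have h2 : ENNReal.ofReal σ⁻¹ * εA = (ε' : ℝ≥0∞) := by
        rw [hεAdef, ← mul_assoc, ← ENNReal.ofReal_mul (inv_nonneg.mpr hσ0.le),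
          inv_mul_cancel₀ hσ0.ne', ENNReal.ofReal_one, one_mul]
      have h1 : ENNReal.ofReal σ⁻¹ * (ENNReal.ofReal (r ^ s * C) * Q)
          = ENNReal.ofReal (C * A₁ ^ s) * Q := by
        rw [← mul_assoc, ← ENNReal.ofReal_mul (inv_nonneg.mpr hσ0.le)]
        congr 2
        rw [hrs]
        field_simp
      rw [h1, h2]
    exact le_trans (mul_le_mul_right hind _) hfinal

end
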